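/- arXiv:2303.13901 — 4 statements merged into one kernel-verified Lean document; each statement's English description precedes it below -/
import Mathlib

section
/- Let n ≥ 1, κ > 0, let μ0 be a compactly supported Borel probability measure on ℝ^n absolutely continuous with respect to Lebesgue measure, μ1 a compactly supported Borel probability measure, and let (v0, α0, μ1^⊥) be the HK logarithmic map components of μ1 at μ0. Then the mean growth rate satisfies ∫ α0 dμ0 = −HK_κ²(μ0,μ1)/κ². -/
open MeasureTheory ENNReal Filter Topology RealInnerProductSpace
open scoped Classical

noncomputable section

abbrev Eucl (n : ℕ) : Type := EuclideanSpace ℝ (Fin n)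

/-- Truncated cosine `Cos`. -/
def truncCos (s : ℝ) : ℝ := Real.cos (min |s| (Real.pi / 2))

/-- The Hellinger–Kantorovich cost function `c_κ`. -/
def cHK {n : ℕ} (κ : ℝ) (x y : Eucl n) : ℝ≥0∞ :=
  if dist x y < κ * Real.pi / 2 then
    ENNReal.ofReal (-2 * κ ^ 2 * Real.log (Real.cos (dist x y / κ)))
  else ⊤

/-- Kullback–Leibler divergence `KL(ρ|μ)`. -/
def KLdiv {α : Type*} [MeasurableSpace α] (ρ μ : Measure α) : ℝ≥0∞ :=
  if ρ ≪ μ then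
    ∫⁻ x, ENNReal.ofReal ((ρ.rnDeriv μ x).toReal * Real.log (ρ.rnDeriv μ x).toReal
      - (ρ.rnDeriv μ x).toReal + 1) ∂μ
  else ⊤

/-- The soft-marginal Hellinger–Kantorovich functional `E_κ(π|μ0,μ1)`. -/
def HKfun {n : ℕ} (κ : ℝ) (π : Measure (Eucl n × Eucl n)) (μ0 μ1 : Measure (Eucl n)) : ℝ≥0∞ :=
  ∫⁻ p, cHK κ p.1 p.2 ∂π + ENNReal.ofReal (κ ^ 2) * KLdiv (π.map Prod.fst) μ0
    + ENNReal.ofReal (κ ^ 2) * KLdiv (π.map Prod.snd) μ1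

/-- The squared Hellinger–Kantorovich distance `HK_κ²(μ0,μ1)`. -/
def HK2 {n : ℕ} (κ : ℝ) (μ0 μ1 : Measure (Eucl n)) : ℝ≥0∞ :=
  ⨅ (π : Measure (Eucl n × Eucl n)) (_ : IsFiniteMeasure π), HKfun κ π μ0 μ1

/-- The squared 2-Wasserstein distance `W2²(μ0,μ1)`. -/
def W2sq {n : ℕ} (μ0 μ1 : Measure (Eucl n)) : ℝ≥0∞ :=
  ⨅ (π : Measure (Eucl n × Eucl n))
    (_ : π.map Prod.fst = μ0 ∧ π.map Prod.snd = μ1),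
      ∫⁻ p, ENNReal.ofReal (dist p.1 p.2 ^ 2) ∂π

/-- Narrow convergence of a sequence of measures. -/
def NarrowTendsto {α : Type*} [MeasurableSpace α] [TopologicalSpace α]
    (ρ : ℕ → Measure α) (ρlim : Measure α) : Prop :=
  ∀ φ : BoundedContinuousFunction α ℝ,
    Tendsto (fun N => ∫ x, φ x ∂(ρ N)) atTop (𝓝 (∫ x, φ x ∂ρlim))

/-- The spherical Hellinger–Kantorovich distance `SHK_κ(μ0,μ1)`. -/
def SHK {n : ℕ} (κ : ℝ) (μ0 μ1 : Measure (Eucl n)) : ℝ :=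
  κ * Real.arccos (1 - (HK2 κ μ0 μ1).toReal / (2 * κ ^ 2))

/-- The square-root measure `√(ρσ)`. -/
def sqrtMeasure {α : Type*} [MeasurableSpace α] (ρ σ : Measure α) : Measure α :=
  (ρ + σ).withDensity (fun x => (ρ.rnDeriv (ρ + σ) x * σ.rnDeriv (ρ + σ) x) ^ (1/2 : ℝ))



/-- barycentric HK velocity. -/
def barV {n : ℕ} (κ : ℝ) (μ0 : Measure (Eucl n)) (π : Measure (Eucl n × Eucl n))
    [IsFiniteMeasure π] (x : Eucl n) : Eucl n :=
  (κ * ((π.map Prod.fst).rnDeriv μ0 x).toReal) •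
    ∫ y, (Real.tan (‖y - x‖ / κ) / ‖y - x‖) • (y - x) ∂(π.condKernel x)

/-- barycentric HK growth. -/
def barA {n : ℕ} (μ0 : Measure (Eucl n)) (π : Measure (Eucl n × Eucl n)) (x : Eucl n) : ℝ :=
  2 * (((π.map Prod.fst).rnDeriv μ0 x).toReal - 1)

/-- barycentric W2 velocity. -/
def barW {n : ℕ} (π : Measure (Eucl n × Eucl n)) [IsFiniteMeasure π] (x : Eucl n) : Eucl n :=
  ∫ y, (y - x) ∂(π.condKernel x)

end


section AuxLemmas

open MeasureTheory ENNReal Filter Topology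

lemma phi_nonneg {t : ℝ} (ht : 0 ≤ t) : 0 ≤ t * Real.log t - t + 1 := by
  rcases eq_or_lt_of_le ht with h | h
  · simp [← h]
  · have h1 : Real.log t⁻¹ ≤ t⁻¹ - 1 := Real.log_le_sub_one_of_pos (by positivity)
    rw [Real.log_inv] at h1
    have h2 := mul_le_mul_of_nonneg_left h1 ht
    have h3 : t * t⁻¹ = 1 := mul_inv_cancel₀ h.ne'
    nlinarith

lemma phi_scale {s t : ℝ} (hs : 0 < s) (ht : 0 ≤ t) :
    s * t * Real.log (s * t) - s * t + 1
      = s * (t * Real.log t - t + 1) + s * Real.log s * t + (1 - s) := by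
  rcases eq_or_lt_of_le ht with h | h
  · simp [← h]
  · rw [Real.log_mul hs.ne' h.ne']
    ring

lemma KLdiv_zero' {α : Type*} [MeasurableSpace α] (μ : Measure α) :
    KLdiv 0 μ = μ Set.univ := by
  rw [KLdiv, if_pos (Measure.AbsolutelyContinuous.zero μ)]
  have h : ∀ᵐ x ∂μ, ENNReal.ofReal (((0 : Measure α).rnDeriv μ x).toReal
      * Real.log ((0 : Measure α).rnDeriv μ x).toReal
      - ((0 : Measure α).rnDeriv μ x).toReal + 1) = 1 := by
    filter_upwards [Measure.rnDeriv_zero μ] with x hx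
    simp [hx]
  rw [lintegral_congr_ae h, lintegral_one]

lemma KLdiv_smul_eq {α : Type*} [MeasurableSpace α] (ρ μ : Measure α)
    [IsFiniteMeasure ρ] [IsFiniteMeasure μ]
    (hac : ρ ≪ μ) (hfin : KLdiv ρ μ ≠ ⊤) {s : ℝ} (hs : 0 < s) :
    0 ≤ s * (∫ x, ((ρ.rnDeriv μ x).toReal * Real.log (ρ.rnDeriv μ x).toReal
          - (ρ.rnDeriv μ x).toReal + 1) ∂μ)
        + s * Real.log s * (∫ x, (ρ.rnDeriv μ x).toReal ∂μ)
        + (1 - s) * (μ Set.univ).toReal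
    ∧ KLdiv (ENNReal.ofReal s • ρ) μ = ENNReal.ofReal
        (s * (∫ x, ((ρ.rnDeriv μ x).toReal * Real.log (ρ.rnDeriv μ x).toReal
          - (ρ.rnDeriv μ x).toReal + 1) ∂μ)
        + s * Real.log s * (∫ x, (ρ.rnDeriv μ x).toReal ∂μ)
        + (1 - s) * (μ Set.univ).toReal) := by
  have hfmeas : Measurable (fun x => (ρ.rnDeriv μ x).toReal) :=
    (Measure.measurable_rnDeriv ρ μ).ennreal_toReal
  have hfint : Integrable (fun x => (ρ.rnDeriv μ x).toReal) μ :=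
    Measure.integrable_toReal_rnDeriv
  have hφmeas : Measurable (fun x => (ρ.rnDeriv μ x).toReal * Real.log (ρ.rnDeriv μ x).toReal
      - (ρ.rnDeriv μ x).toReal + 1) :=
    ((hfmeas.mul (Real.measurable_log.comp hfmeas)).sub hfmeas).add_const 1
  have hφnn : ∀ x, 0 ≤ (ρ.rnDeriv μ x).toReal * Real.log (ρ.rnDeriv μ x).toReal
      - (ρ.rnDeriv μ x).toReal + 1 := fun x => phi_nonneg ENNReal.toReal_nonneg
  have hφint : Integrable (fun x => (ρ.rnDeriv μ x).toReal * Real.log (ρ.rnDeriv μ x).toReal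
      - (ρ.rnDeriv μ x).toReal + 1) μ := by
    refine ⟨hφmeas.aestronglyMeasurable, ?_⟩
    rw [hasFiniteIntegral_iff_ofReal (ae_of_all _ hφnn)]
    rw [KLdiv, if_pos hac] at hfin
    exact hfin.lt_top
  have hgint : Integrable (fun x => s * ((ρ.rnDeriv μ x).toReal * Real.log (ρ.rnDeriv μ x).toReal
      - (ρ.rnDeriv μ x).toReal + 1) + s * Real.log s * (ρ.rnDeriv μ x).toReal + (1 - s)) μ :=
    ((hφint.const_mul s).add (hfint.const_mul _)).add (integrable_const _)
  have hgnn : ∀ x, 0 ≤ s * ((ρ.rnDeriv μ x).toReal * Real.log (ρ.rnDeriv μ x).toReal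
      - (ρ.rnDeriv μ x).toReal + 1) + s * Real.log s * (ρ.rnDeriv μ x).toReal + (1 - s) := by
    intro x
    rw [← phi_scale hs ENNReal.toReal_nonneg]
    exact phi_nonneg (by positivity)
  have hgval : ∫ x, (s * ((ρ.rnDeriv μ x).toReal * Real.log (ρ.rnDeriv μ x).toReal
        - (ρ.rnDeriv μ x).toReal + 1) + s * Real.log s * (ρ.rnDeriv μ x).toReal + (1 - s)) ∂μ
      = s * (∫ x, ((ρ.rnDeriv μ x).toReal * Real.log (ρ.rnDeriv μ x).toReal
          - (ρ.rnDeriv μ x).toReal + 1) ∂μ)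
        + s * Real.log s * (∫ x, (ρ.rnDeriv μ x).toReal ∂μ)
        + (1 - s) * (μ Set.univ).toReal := by
    have hint1 : Integrable (fun x => s * ((ρ.rnDeriv μ x).toReal * Real.log (ρ.rnDeriv μ x).toReal
        - (ρ.rnDeriv μ x).toReal + 1) + s * Real.log s * (ρ.rnDeriv μ x).toReal) μ :=
      (hφint.const_mul s).add (hfint.const_mul _)
    rw [integral_add hint1 (integrable_const _),
        integral_add (hφint.const_mul s) (hfint.const_mul _),
        integral_const_mul, integral_const_mul, integral_const, smul_eq_mul]
    simp only [measureReal_def]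
    ring
  constructor
  · rw [← hgval]
    exact integral_nonneg hgnn
  · have hsmul_ac : (ENNReal.ofReal s • ρ) ≪ μ := hac.smul_left _
    rw [KLdiv, if_pos hsmul_ac]
    have hcong : ∀ᵐ x ∂μ, ENNReal.ofReal (((ENNReal.ofReal s • ρ).rnDeriv μ x).toReal
          * Real.log ((ENNReal.ofReal s • ρ).rnDeriv μ x).toReal
          - ((ENNReal.ofReal s • ρ).rnDeriv μ x).toReal + 1)
        = ENNReal.ofReal (s * ((ρ.rnDeriv μ x).toReal * Real.log (ρ.rnDeriv μ x).toReal
          - (ρ.rnDeriv μ x).toReal + 1) + s * Real.log s * (ρ.rnDeriv μ x).toReal + (1 - s)) := by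
      filter_upwards [Measure.rnDeriv_smul_left_of_ne_top ρ μ ENNReal.ofReal_ne_top] with x hx
      rw [hx]
      simp only [Pi.smul_apply, smul_eq_mul, ENNReal.toReal_mul, ENNReal.toReal_ofReal hs.le]
      congr 1
      exact phi_scale hs ENNReal.toReal_nonneg
    rw [lintegral_congr_ae hcong,
        ← ofReal_integral_eq_lintegral_ofReal hgint (ae_of_all _ hgnn), hgval]

lemma hasDerivAt_Hfun (Ir L0 P0 L1 P1 κ : ℝ) :
    HasDerivAt (fun s : ℝ => s * Ir + κ ^ 2 * (s * L0 + s * Real.log s * P0 + (1 - s))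
        + κ ^ 2 * (s * L1 + s * Real.log s * P1 + (1 - s)))
      (Ir + κ ^ 2 * (L0 + P0 - 1) + κ ^ 2 * (L1 + P1 - 1)) 1 := by
  have h1 : HasDerivAt (fun s : ℝ => s * Real.log s) (Real.log 1 + 1) 1 :=
    Real.hasDerivAt_mul_log one_ne_zero
  have h2 : HasDerivAt (fun s : ℝ => s) 1 1 := hasDerivAt_id 1
  have hA : HasDerivAt (fun s : ℝ => s * L0 + s * Real.log s * P0 + (1 - s))
      (1 * L0 + (Real.log 1 + 1) * P0 + (0 - 1)) 1 :=
    ((h2.mul_const L0).add (h1.mul_const P0)).add ((hasDerivAt_const 1 1).sub h2)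
  have hB : HasDerivAt (fun s : ℝ => s * L1 + s * Real.log s * P1 + (1 - s))
      (1 * L1 + (Real.log 1 + 1) * P1 + (0 - 1)) 1 :=
    ((h2.mul_const L1).add (h1.mul_const P1)).add ((hasDerivAt_const 1 1).sub h2)
  have h := ((h2.mul_const Ir).add (hA.const_mul (κ ^ 2))).add (hB.const_mul (κ ^ 2))
  convert h using 1
  · rfl
  · rfl
  · rfl
  simp only [Real.log_one]
  ring

end AuxLemmas

/-- the mean growth rate equals `−HK_κ²(μ0,μ1)/κ²` for probability measures. -/
theorem hk_mean_growth
    {n : ℕ} (hn : 1 ≤ n) (κ : ℝ) (hκ : 0 < κ)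
    (μ0 μ1 : Measure (Eucl n)) [IsProbabilityMeasure μ0] [IsProbabilityMeasure μ1]
    (hμ0K : ∃ K : Set (Eucl n), IsCompact K ∧ μ0 Kᶜ = 0)
    (hμ1K : ∃ K : Set (Eucl n), IsCompact K ∧ μ1 Kᶜ = 0)
    (hμ0ac : μ0 ≪ (volume : Measure (Eucl n)))
    -- `π = (id,T)_# π0` is the unique minimizer of `E_κ(·|μ0,μ1)`
    (π : Measure (Eucl n × Eucl n)) [IsFiniteMeasure π]
    (hπopt : HKfun κ π μ0 μ1 = HK2 κ μ0 μ1)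
    (hπuniq : ∀ π' : Measure (Eucl n × Eucl n), IsFiniteMeasure π' →
      HKfun κ π' μ0 μ1 = HK2 κ μ0 μ1 → π' = π)
    (T : Eucl n → Eucl n) (hT : Measurable T)
    (hπT : π = (π.map Prod.fst).map (fun x => (x, T x)))
    -- the components `(v0, α0, μ1^⊥)` of the HK logarithmic map
    (v0 : Eucl n → Eucl n) (α0 : Eucl n → ℝ)
    (hv0 : ∀ᵐ x ∂(π.map Prod.fst), v0 x =
      (κ * ((π.map Prod.fst).rnDeriv μ0 x).toReal * Real.tan (‖T x - x‖ / κ) / ‖T x - x‖) •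
        (T x - x))
    (hv0perp : ∀ᵐ x ∂(μ0.singularPart (π.map Prod.fst)), v0 x = 0)
    (hα0 : ∀ᵐ x ∂(π.map Prod.fst),
      α0 x = 2 * (((π.map Prod.fst).rnDeriv μ0 x).toReal - 1))
    (hα0perp : ∀ᵐ x ∂(μ0.singularPart (π.map Prod.fst)), α0 x = -2) :
    ∫ x, α0 x ∂μ0 = -(HK2 κ μ0 μ1).toReal / κ ^ 2 := by
  classical
  have hκ2 : (0:ℝ) < κ ^ 2 := by positivity
  haveI hfin0 : IsFiniteMeasure (π.map Prod.fst) := Measure.isFiniteMeasure_map π Prod.fst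
  haveI hfin1 : IsFiniteMeasure (π.map Prod.snd) := Measure.isFiniteMeasure_map π Prod.snd
  -- Step A : finiteness of HK2
  have hHK2top : HK2 κ μ0 μ1 < ⊤ := by
    have hle : HK2 κ μ0 μ1 ≤ HKfun κ (0 : Measure (Eucl n × Eucl n)) μ0 μ1 := by
      refine iInf_le_of_le 0 ?_
      exact iInf_le_of_le MeasureTheory.isFiniteMeasureZero le_rfl
    refine lt_of_le_of_lt hle ?_
    rw [HKfun, Measure.map_zero, Measure.map_zero, KLdiv_zero', KLdiv_zero',
        lintegral_zero_measure]
    simp only [measure_univ, mul_one, zero_add]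
    exact ENNReal.add_lt_top.mpr ⟨ENNReal.ofReal_lt_top, ENNReal.ofReal_lt_top⟩
  -- Step B : each term of the optimal functional is finite
  have hEfin : HKfun κ π μ0 μ1 ≠ ⊤ := by rw [hπopt]; exact hHK2top.ne
  have hκne : ENNReal.ofReal (κ ^ 2) ≠ 0 := (ENNReal.ofReal_pos.mpr hκ2).ne'
  rw [HKfun, ENNReal.add_ne_top, ENNReal.add_ne_top] at hEfin
  obtain ⟨⟨hIne, hK0ne'⟩, hK1ne'⟩ := hEfin
  have hK0ne : KLdiv (π.map Prod.fst) μ0 ≠ ⊤ := by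
    intro h; rw [h, ENNReal.mul_top hκne] at hK0ne'; exact hK0ne' rfl
  have hK1ne : KLdiv (π.map Prod.snd) μ1 ≠ ⊤ := by
    intro h; rw [h, ENNReal.mul_top hκne] at hK1ne'; exact hK1ne' rfl
  have hac0 : (π.map Prod.fst) ≪ μ0 := by
    by_contra h; rw [KLdiv, if_neg h] at hK0ne; exact hK0ne rfl
  have hac1 : (π.map Prod.snd) ≪ μ1 := by
    by_contra h; rw [KLdiv, if_neg h] at hK1ne; exact hK1ne rfl
  -- Step C : named real quantities
  have hS0 := fun (s : ℝ) (hs : 0 < s) => KLdiv_smul_eq (π.map Prod.fst) μ0 hac0 hK0ne hs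
  have hS1 := fun (s : ℝ) (hs : 0 < s) => KLdiv_smul_eq (π.map Prod.snd) μ1 hac1 hK1ne hs
  simp only [measure_univ, ENNReal.toReal_one, mul_one] at hS0 hS1
  set Ir := (∫⁻ p, cHK κ p.1 p.2 ∂π).toReal with hIr
  set L0 := ∫ x, ((π.map Prod.fst).rnDeriv μ0 x).toReal
      * Real.log ((π.map Prod.fst).rnDeriv μ0 x).toReal
      - ((π.map Prod.fst).rnDeriv μ0 x).toReal + 1 ∂μ0 with hL0
  set P0 := ∫ x, ((π.map Prod.fst).rnDeriv μ0 x).toReal ∂μ0 with hP0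
  set L1 := ∫ x, ((π.map Prod.snd).rnDeriv μ1 x).toReal
      * Real.log ((π.map Prod.snd).rnDeriv μ1 x).toReal
      - ((π.map Prod.snd).rnDeriv μ1 x).toReal + 1 ∂μ1 with hL1
  set P1 := ∫ x, ((π.map Prod.snd).rnDeriv μ1 x).toReal ∂μ1 with hP1
  have hIrnn : 0 ≤ Ir := hIr ▸ ENNReal.toReal_nonneg
  -- Step D : value of the functional on scaled plans
  have hHKs : ∀ s : ℝ, 0 < s → HKfun κ (ENNReal.ofReal s • π) μ0 μ1
      = ENNReal.ofReal (s * Ir + κ ^ 2 * (s * L0 + s * Real.log s * P0 + (1 - s))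
          + κ ^ 2 * (s * L1 + s * Real.log s * P1 + (1 - s))) := by
    intro s hs
    rw [HKfun, Measure.map_smul, Measure.map_smul, lintegral_smul_measure,
        (hS0 s hs).2, (hS1 s hs).2, ← ENNReal.ofReal_toReal hIne,
        smul_eq_mul, ← ENNReal.ofReal_mul hs.le, ← ENNReal.ofReal_mul hκ2.le, ← ENNReal.ofReal_mul hκ2.le,
        ← ENNReal.ofReal_add (mul_nonneg hs.le ENNReal.toReal_nonneg)
          (mul_nonneg hκ2.le (hS0 s hs).1),
        ← ENNReal.ofReal_add (add_nonneg (mul_nonneg hs.le ENNReal.toReal_nonneg)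
          (mul_nonneg hκ2.le (hS0 s hs).1)) (mul_nonneg hκ2.le (hS1 s hs).1)]
  have hHnn : ∀ s : ℝ, 0 < s → 0 ≤ s * Ir + κ ^ 2 * (s * L0 + s * Real.log s * P0 + (1 - s))
      + κ ^ 2 * (s * L1 + s * Real.log s * P1 + (1 - s)) := by
    intro s hs
    have h0 := (hS0 s hs).1
    have h1 := (hS1 s hs).1
    have h2 : 0 ≤ s * Ir := mul_nonneg hs.le hIrnn
    nlinarith [mul_nonneg hκ2.le h0, mul_nonneg hκ2.le h1]
  -- Step E : local minimality at s = 1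
  have hofmin : ∀ s : ℝ, 0 < s →
      ENNReal.ofReal (1 * Ir + κ ^ 2 * (1 * L0 + 1 * Real.log 1 * P0 + (1 - 1))
          + κ ^ 2 * (1 * L1 + 1 * Real.log 1 * P1 + (1 - 1)))
      ≤ ENNReal.ofReal (s * Ir + κ ^ 2 * (s * L0 + s * Real.log s * P0 + (1 - s))
          + κ ^ 2 * (s * L1 + s * Real.log s * P1 + (1 - s))) := by
    intro s hs
    haveI : IsFiniteMeasure (ENNReal.ofReal s • π) := ⟨by
      rw [Measure.smul_apply, smul_eq_mul]
      exact ENNReal.mul_lt_top ENNReal.ofReal_lt_top (measure_lt_top π _)⟩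
    rw [← hHKs 1 one_pos, ← hHKs s hs, ENNReal.ofReal_one, one_smul, hπopt]
    exact iInf_le_of_le (ENNReal.ofReal s • π) (iInf_le_of_le this le_rfl)
  have hmin : IsLocalMin (fun s : ℝ => s * Ir
      + κ ^ 2 * (s * L0 + s * Real.log s * P0 + (1 - s))
      + κ ^ 2 * (s * L1 + s * Real.log s * P1 + (1 - s))) 1 := by
    filter_upwards [eventually_gt_nhds (show (0:ℝ) < 1 by norm_num)] with s hs
    have h := hofmin s hs
    rw [ENNReal.ofReal_le_ofReal_iff (hHnn s hs)] at h
    exact h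
  have hderiv : Ir + κ ^ 2 * (L0 + P0 - 1) + κ ^ 2 * (L1 + P1 - 1) = 0 :=
    hmin.hasDerivAt_eq_zero (hasDerivAt_Hfun Ir L0 P0 L1 P1 κ)
  -- Step F : value of HK2
  have hH1 := hHKs 1 one_pos
  rw [ENNReal.ofReal_one, one_smul, hπopt] at hH1
  have hH1nn := hHnn 1 one_pos
  rw [Real.log_one] at hH1nn
  have hHK2toReal : (HK2 κ μ0 μ1).toReal = Ir + κ ^ 2 * L0 + κ ^ 2 * L1 := by
    rw [hH1, ENNReal.toReal_ofReal (hHnn 1 one_pos)]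
    rw [Real.log_one]
    ring
  -- Step G : equal marginal masses
  have hP0val : P0 = ((π.map Prod.fst) Set.univ).toReal :=
    hP0.trans (Measure.integral_toReal_rnDeriv hac0)
  have hP1val : P1 = ((π.map Prod.snd) Set.univ).toReal :=
    hP1.trans (Measure.integral_toReal_rnDeriv hac1)
  have hP01 : P1 = P0 := by
    rw [hP0val, hP1val, Measure.map_apply measurable_fst MeasurableSet.univ,
        Measure.map_apply measurable_snd MeasurableSet.univ]
    simp
  -- Step H : the integral of α0
  have hsing : (π.map Prod.fst).rnDeriv μ0 =ᵐ[μ0.singularPart (π.map Prod.fst)] 0 :=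
    Measure.rnDeriv_eq_zero_of_mutuallySingular
      (Measure.mutuallySingular_singularPart μ0 (π.map Prod.fst)).symm
      (Measure.absolutelyContinuous_of_le (Measure.singularPart_le μ0 _))
  have hae : ∀ᵐ x ∂μ0, α0 x = 2 * (((π.map Prod.fst).rnDeriv μ0 x).toReal - 1) := by
    have h1 : ∀ᵐ x ∂(μ0.singularPart (π.map Prod.fst)),
        α0 x = 2 * (((π.map Prod.fst).rnDeriv μ0 x).toReal - 1) := by
      filter_upwards [hα0perp, hsing] with x h h'
      rw [h, h']
      norm_num
    have h2 : ∀ᵐ x ∂((π.map Prod.fst).withDensity (μ0.rnDeriv (π.map Prod.fst))),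
        α0 x = 2 * (((π.map Prod.fst).rnDeriv μ0 x).toReal - 1) :=
      (withDensity_absolutelyContinuous _ _).ae_le hα0
    have h3 := (ae_add_measure_iff).mpr ⟨h1, h2⟩
    haveI := Measure.haveLebesgueDecomposition_of_sigmaFinite (μ := μ0) (ν := π.map Prod.fst)
    rwa [Measure.singularPart_add_rnDeriv μ0 (π.map Prod.fst)] at h3
  have hint : ∫ x, α0 x ∂μ0 = 2 * (P0 - 1) := by
    rw [integral_congr_ae hae, integral_const_mul,
        integral_sub Measure.integrable_toReal_rnDeriv (integrable_const 1), integral_const,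
        probReal_univ, ← hP0]
    norm_num
  -- conclusion
  rw [hint, hHK2toReal, eq_div_iff hκ2.ne']
  linear_combination hderiv - κ ^ 2 * hP01
end

section
/- Let n ≥ 1, K ⊂ ℝ^n compact, and let (μ0^N), (μ1^N) be sequences of Borel probability measures supported in K converging narrowly to μ0 and μ1 respectively, where μ0 is absolutely continuous with respect to Lebesgue measure. Let π^N be couplings of (μ0^N, μ1^N) converging narrowly to π, where π is the (unique) optimal coupling for W2²(μ0,μ1). Define the barycentric vector fields v0^N(x) = ∫ (y − x) dπ^N(y|x) (disintegration of π^N with respect to its first marginal μ0^N), and let v0 = T − id where π = (id,T)_# μ0. Then for every continuous vector field φ : K → ℝ^n, ∫ ⟨φ(x), v0^N(x)⟩ dμ0^N(x) → ∫ ⟨φ(x), v0(x)⟩ dμ0(x) as N → ∞; that is, the momentum measures v0^N·μ0^N converge narrowly to v0·μ0. -/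
open MeasureTheory ENNReal Filter Topology RealInnerProductSpace
open scoped Classical

/-- narrow convergence of the barycentric momentum measures for `W2`. -/
theorem w2_barycentric_momentum_narrow_convergence
    {n : ℕ} (hn : 1 ≤ n) (K : Set (Eucl n)) (hK : IsCompact K)
    (μ0N μ1N : ℕ → Measure (Eucl n))
    [∀ N, IsProbabilityMeasure (μ0N N)] [∀ N, IsProbabilityMeasure (μ1N N)]
    (hμ0NK : ∀ N, μ0N N Kᶜ = 0) (hμ1NK : ∀ N, μ1N N Kᶜ = 0)
    (μ0 μ1 : Measure (Eucl n)) [IsProbabilityMeasure μ0] [IsProbabilityMeasure μ1]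
    (hμ0conv : NarrowTendsto μ0N μ0) (hμ1conv : NarrowTendsto μ1N μ1)
    (hμ0ac : μ0 ≪ (volume : Measure (Eucl n)))
    -- `π^N` are couplings of `(μ0^N, μ1^N)` converging narrowly to `π`
    (π : ℕ → Measure (Eucl n × Eucl n)) [∀ N, IsFiniteMeasure (π N)]
    (hπNmarg : ∀ N, (π N).map Prod.fst = μ0N N ∧ (π N).map Prod.snd = μ1N N)
    -- `π = (id,T)_# μ0` is the unique optimal coupling for `W2²(μ0,μ1)`
    (T : Eucl n → Eucl n) (hT : Measurable T)
    (hTmarg : (μ0.map fun x => (x, T x)).map Prod.snd = μ1)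
    (hTopt : ∫⁻ p, ENNReal.ofReal (dist p.1 p.2 ^ 2) ∂(μ0.map fun x => (x, T x))
      = W2sq μ0 μ1)
    (hTuniq : ∀ γ : Measure (Eucl n × Eucl n), γ.map Prod.fst = μ0 → γ.map Prod.snd = μ1 →
      ∫⁻ p, ENNReal.ofReal (dist p.1 p.2 ^ 2) ∂γ = W2sq μ0 μ1 →
      γ = μ0.map fun x => (x, T x))
    (hπconv : NarrowTendsto π (μ0.map fun x => (x, T x))) :
    ∀ φ : Eucl n → Eucl n, Continuous φ →
      Tendsto (fun N => ∫ x, ⟪φ x, barW (π N) x⟫ ∂(μ0N N)) atTop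
        (𝓝 (∫ x, ⟪φ x, T x - x⟫ ∂μ0)) := by
  intro φ hφ
  have hKm : MeasurableSet K := hK.isClosed.measurableSet
  set πlim : Measure (Eucl n × Eucl n) := μ0.map fun x => (x, T x) with hπlim
  have hTpair : Measurable fun x : Eucl n => (x, T x) := measurable_id.prodMk hT
  have hπliminst : IsProbabilityMeasure πlim := Measure.isProbabilityMeasure_map hTpair.aemeasurable
  -- each π N is a probability measure
  have hπprob : ∀ N, IsProbabilityMeasure (π N) := by
    intro N
    constructor
    have h := congrArg (fun m : Measure (Eucl n) => m Set.univ) (hπNmarg N).1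
    simpa [Measure.map_apply measurable_fst MeasurableSet.univ] using h
  -- π N vanishes outside K ×ˢ K
  have hπK : ∀ N, (π N) (K ×ˢ K)ᶜ = 0 := by
    intro N
    have h1 : (π N) (Kᶜ ×ˢ (Set.univ : Set (Eucl n))) = 0 := by
      have h := congrArg (fun m : Measure (Eucl n) => m Kᶜ) (hπNmarg N).1
      simp only [Measure.map_apply measurable_fst hKm.compl] at h
      rw [Set.prod_univ]
      exact h.trans (hμ0NK N)
    have h2 : (π N) ((Set.univ : Set (Eucl n)) ×ˢ Kᶜ) = 0 := by
      have h := congrArg (fun m : Measure (Eucl n) => m Kᶜ) (hπNmarg N).2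
      simp only [Measure.map_apply measurable_snd hKm.compl] at h
      rw [Set.univ_prod]
      exact h.trans (hμ1NK N)
    rw [Set.compl_prod_eq_union]
    exact measure_union_null h1 h2
  -- πlim vanishes outside K ×ˢ K, by portmanteau
  have hπlimK : πlim (K ×ˢ K)ᶜ = 0 := by
    have hKKm : MeasurableSet (K ×ˢ K) := hKm.prod hKm
    rw [prob_compl_eq_zero_iff hKKm]
    set P : ℕ → ProbabilityMeasure (Eucl n × Eucl n) := fun N => ⟨π N, hπprob N⟩ with hP
    set Plim : ProbabilityMeasure (Eucl n × Eucl n) := ⟨πlim, hπliminst⟩ with hPl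
    have hPt : Tendsto P atTop (𝓝 Plim) := by
      rw [ProbabilityMeasure.tendsto_iff_forall_integral_tendsto]
      intro f
      exact hπconv f
    have hls := ProbabilityMeasure.limsup_measure_closed_le_of_tendsto hPt
      (hK.prod hK).isClosed
    have hone : ∀ N, (π N) (K ×ˢ K) = 1 := fun N =>
      (prob_compl_eq_zero_iff hKKm).mp (hπK N)
    have h1 : (1 : ℝ≥0∞) ≤ πlim (K ×ˢ K) := by
      have : (atTop.limsup fun N => (π N) (K ×ˢ K)) = 1 := by
        simp only [hone]
        exact limsup_const 1
      calc (1 : ℝ≥0∞) = atTop.limsup fun N => (π N) (K ×ˢ K) := this.symm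
        _ ≤ (Plim : Measure (Eucl n × Eucl n)) (K ×ˢ K) := hls
        _ = πlim (K ×ˢ K) := rfl
    exact le_antisymm prob_le_one h1
  -- μ0 and T_#μ0 are supported in K
  have hμ0K : μ0 Kᶜ = 0 := by
    have h : μ0 Kᶜ = πlim (Kᶜ ×ˢ (Set.univ : Set (Eucl n))) := by
      rw [hπlim, Measure.map_apply hTpair (hKm.compl.prod MeasurableSet.univ)]
      congr 1
      ext x
      simp
    rw [h]
    refine measure_mono_null ?_ hπlimK
    intro p hp
    simp only [Set.mem_prod, Set.mem_compl_iff] at hp ⊢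
    exact fun h => hp.1 h.1
  have hTK : μ0 {x | T x ∈ Kᶜ} = 0 := by
    have h : μ0 {x | T x ∈ Kᶜ} = πlim ((Set.univ : Set (Eucl n)) ×ˢ Kᶜ) := by
      rw [hπlim, Measure.map_apply hTpair (MeasurableSet.univ.prod hKm.compl)]
      congr 1
      ext x
      simp
    rw [h]
    refine measure_mono_null ?_ hπlimK
    intro p hp
    simp only [Set.mem_prod, Set.mem_compl_iff] at hp ⊢
    exact fun h => hp.2 h.2
  -- cutoff function
  obtain ⟨χ, hχ1, -, hχsupp, hχ01⟩ :=
    exists_continuous_one_zero_of_isCompact hK isClosed_empty (Set.disjoint_empty K)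
  -- the test function
  set f : Eucl n × Eucl n → ℝ := fun p => ⟪φ p.1, p.2 - p.1⟫ * (χ p.1 * χ p.2) with hf
  have hfc : Continuous f := by
    apply Continuous.mul
    · exact (hφ.comp continuous_fst).inner (continuous_snd.sub continuous_fst)
    · exact ((χ.continuous.comp continuous_fst)).mul (χ.continuous.comp continuous_snd)
  have hfsupp : HasCompactSupport f := by
    apply HasCompactSupport.intro (hχsupp.prod hχsupp)
    intro p hp
    simp only [Set.mem_prod, not_and_or] at hp
    rcases hp with hp | hp
    · simp [hf, image_eq_zero_of_notMem_tsupport hp]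
    · simp [hf, image_eq_zero_of_notMem_tsupport hp]
  set fb : BoundedContinuousFunction (Eucl n × Eucl n) ℝ := ofCompactSupport f hfc hfsupp
    with hfb
  have hfbcoe : ∀ p, fb p = f p := fun _ => rfl
  -- radius bound for K
  obtain ⟨R, hR⟩ := hK.isBounded.subset_closedBall 0
  -- the key identity for each N
  have hNeq : ∀ N, ∫ x, ⟪φ x, barW (π N) x⟫ ∂(μ0N N) = ∫ p, f p ∂(π N) := by
    intro N
    set ρ := π N with hρ
    have hfst : ρ.fst = μ0N N := (hπNmarg N).1
    have hint : Integrable f ρ := hfc.integrable_of_hasCompactSupport hfsupp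
    -- a.e. x in K
    have h1 : ∀ᵐ x ∂ρ.fst, x ∈ K := by
      rw [hfst]
      rw [ae_iff]
      exact hμ0NK N
    -- a.e. the conditional kernel is supported in K
    have hsnd : ρ ((Set.univ : Set (Eucl n)) ×ˢ Kᶜ) = 0 := by
      have h := congrArg (fun m : Measure (Eucl n) => m Kᶜ) (hπNmarg N).2
      simp only [Measure.map_apply measurable_snd hKm.compl] at h
      rw [Set.univ_prod]
      exact h.trans (hμ1NK N)
    have h2 : ∀ᵐ x ∂ρ.fst, ρ.condKernel x Kᶜ = 0 := by
      have hmem := Measure.lintegral_condKernel_mem (ρ := ρ)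
        (MeasurableSet.univ.prod hKm.compl)
      simp only [Set.mem_prod, Set.mem_univ, true_and] at hmem
      rw [hsnd] at hmem
      have hmeas : Measurable fun x => ρ.condKernel x Kᶜ :=
        ProbabilityTheory.Kernel.measurable_coe _ hKm.compl
      have := (lintegral_eq_zero_iff hmeas).mp hmem
      filter_upwards [this] with x hx using hx
    -- a.e. identification of the inner integral
    have key : ∀ᵐ x ∂ρ.fst, ∫ y, f (x, y) ∂ρ.condKernel x = ⟪φ x, barW ρ x⟫ := by
      filter_upwards [h1, h2] with x hx hx2
      have hy : ∀ᵐ y ∂ρ.condKernel x, y ∈ K := by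
        rw [ae_iff]
        exact hx2
      have hintk : Integrable (fun y => y - x) (ρ.condKernel x) := by
        refine (integrable_const (R + ‖x‖)).mono'
          ((continuous_id.sub continuous_const).aestronglyMeasurable) ?_
        filter_upwards [hy] with y hyK
        have hyR : ‖y‖ ≤ R := by
          have := hR hyK
          simpa [Metric.mem_closedBall] using this
        calc ‖y - x‖ ≤ ‖y‖ + ‖x‖ := norm_sub_le _ _
          _ ≤ R + ‖x‖ := by linarith
      have hcongr : ∫ y, f (x, y) ∂ρ.condKernel x
          = ∫ y, ⟪φ x, y - x⟫ ∂ρ.condKernel x := by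
        apply integral_congr_ae
        filter_upwards [hy] with y hyK
        simp [hf, hχ1 hx, hχ1 hyK]
      rw [hcongr, integral_inner hintk]
      rfl
    calc ∫ x, ⟪φ x, barW ρ x⟫ ∂(μ0N N)
        = ∫ x, ⟪φ x, barW ρ x⟫ ∂ρ.fst := by rw [hfst]
      _ = ∫ x, ∫ y, f (x, y) ∂ρ.condKernel x ∂ρ.fst := (integral_congr_ae key).symm
      _ = ∫ p, f p ∂ρ := Measure.integral_condKernel hint
  -- identification of the limit
  have hlimeq : ∫ p, f p ∂πlim = ∫ x, ⟪φ x, T x - x⟫ ∂μ0 := by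
    have hmap : ∫ p, f p ∂πlim = ∫ x, f (x, T x) ∂μ0 := by
      rw [hπlim]
      exact integral_map hTpair.aemeasurable hfc.aestronglyMeasurable
    rw [hmap]
    apply integral_congr_ae
    have h1 : ∀ᵐ x ∂μ0, x ∈ K := by
      rw [ae_iff]; exact hμ0K
    have h2 : ∀ᵐ x ∂μ0, T x ∈ K := by
      rw [ae_iff]
      simpa using hTK
    filter_upwards [h1, h2] with x hx hTx
    simp [hf, hχ1 hx, hχ1 hTx]
  -- conclude by narrow convergence
  have hconv := hπconv fb
  simp only [hfbcoe] at hconv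
  rw [hlimeq] at hconv
  exact hconv.congr (fun N => (hNeq N).symm)
end

section
/- Let n ≥ 1, κ > 0, x0, x1 ∈ ℝ^n and m0, m1 ≥ 0. Then HK_κ²(m0·δ_{x0}, m1·δ_{x1}) = κ²( m0 + m1 − 2√(m0 m1) Cos(|x0−x1|/κ) ), where Cos(s) = cos(min(|s|, π/2)). Moreover, if m0, m1 > 0 and 0 < |x0−x1| < κπ/2, then the unique minimizer of E_κ(·|m0δ_{x0}, m1δ_{x1}) is π = cos(|x0−x1|/κ)·√(m0 m1)·δ_{(x0,x1)}. -/
open MeasureTheory ENNReal Filter Topology RealInnerProductSpace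
open scoped Classical

section Lemmas

lemma meas_eq_smul_dirac {α : Type*} [MeasurableSpace α] [MeasurableSingletonClass α]
    (ρ : Measure α) (x : α) (h : ρ {x}ᶜ = 0) : ρ = ρ Set.univ • Measure.dirac x := by
  have hx : ρ {x} = ρ Set.univ := by
    have := measure_add_measure_compl (μ := ρ) (measurableSet_singleton x)
    rw [h, add_zero] at this; exact this
  ext s hs
  rw [Measure.smul_apply, smul_eq_mul, Measure.dirac_apply' _ hs]
  by_cases hxs : x ∈ s
  · have h1 : ρ s = ρ Set.univ := by
      refine le_antisymm (measure_mono (Set.subset_univ s)) ?_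
      calc ρ Set.univ = ρ {x} := hx.symm
        _ ≤ ρ s := measure_mono (Set.singleton_subset_iff.mpr hxs)
    simp [h1, Set.indicator_of_mem hxs]
  · have h1 : ρ s = 0 := measure_mono_null (fun y hy (hyx : y = x) => hxs (hyx ▸ hy)) h
    simp [h1, Set.indicator_of_notMem hxs]

lemma smul_dirac_ac {α : Type*} [MeasurableSpace α]
    (x : α) (a c : ℝ≥0∞) (hc : c ≠ 0) : a • Measure.dirac x ≪ c • Measure.dirac x := by
  intro s hs
  rw [Measure.smul_apply, smul_eq_mul] at hs ⊢
  rcases mul_eq_zero.mp hs with h | h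
  · exact absurd h hc
  · simp [h]

lemma KLdiv_smul_dirac {α : Type*} [MeasurableSpace α] [MeasurableSingletonClass α]
    (x : α) (a : ℝ≥0∞) (ha : a ≠ ⊤) (c : ℝ) (hc : 0 < c) :
    KLdiv (a • Measure.dirac x) (ENNReal.ofReal c • Measure.dirac x)
      = ENNReal.ofReal c * ENNReal.ofReal
          ((a.toReal / c) * Real.log (a.toReal / c) - a.toReal / c + 1) := by
  set μ := ENNReal.ofReal c • Measure.dirac x with hμ
  set ρ := a • Measure.dirac x with hρ
  haveI : IsFiniteMeasure ρ := ⟨by simp [hρ, Measure.smul_apply, lt_top_iff_ne_top, ha]⟩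
  haveI : IsFiniteMeasure μ := ⟨by simp [hμ, Measure.smul_apply, lt_top_iff_ne_top]⟩
  have hcne : ENNReal.ofReal c ≠ 0 := by simp [ENNReal.ofReal_eq_zero, not_le, hc]
  have hac : ρ ≪ μ := smul_dirac_ac x a (ENNReal.ofReal c) hcne
  have hwd := Measure.withDensity_rnDeriv_eq ρ μ hac
  have hval : ρ.rnDeriv μ x = a / ENNReal.ofReal c := by
    have h1 : μ.withDensity (ρ.rnDeriv μ) Set.univ = ρ Set.univ := by rw [hwd]
    rw [withDensity_apply _ MeasurableSet.univ, Measure.restrict_univ] at h1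
    rw [hμ, lintegral_smul_measure, lintegral_dirac] at h1
    have h2 : ρ Set.univ = a := by simp [hρ]
    rw [h2] at h1
    exact ((ENNReal.eq_div_iff hcne ENNReal.ofReal_ne_top).mpr h1)
  rw [KLdiv, if_pos hac, hμ, lintegral_smul_measure, lintegral_dirac, hval]
  congr 2 <;> rw [ENNReal.toReal_div, ENNReal.toReal_ofReal hc.le]

lemma KLdiv_zero_smul_dirac {α : Type*} [MeasurableSpace α] [MeasurableSingletonClass α]
    (x : α) (c : ℝ) (hc : 0 ≤ c) :
    KLdiv 0 (ENNReal.ofReal c • Measure.dirac x) = ENNReal.ofReal c := by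
  rcases eq_or_lt_of_le hc with h0 | h0
  · rw [← h0]
    simp only [ENNReal.ofReal_zero, zero_smul]
    rw [KLdiv, if_pos Measure.AbsolutelyContinuous.rfl]
    simp
  · have := KLdiv_smul_dirac x 0 (by simp) c h0
    simpa using this

lemma klF_bounds {m s : ℝ} (hm : 0 ≤ m) (hs : 0 < s) :
    0 ≤ m * Real.log (m / s) - m + s ∧ (m ≠ s → 0 < m * Real.log (m / s) - m + s) := by
  rcases eq_or_lt_of_le hm with h0 | h0
  · constructor
    · simp [← h0]; linarith
    · intro _; simp [← h0]; linarith
  · have hinv : Real.log (m / s) = - Real.log (s / m) := by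
      rw [← Real.log_inv]; congr 1; rw [inv_div]
    have hmul : m * (s / m - 1) = s - m := by field_simp
    constructor
    · have hlog : Real.log (s / m) ≤ s / m - 1 := Real.log_le_sub_one_of_pos (by positivity)
      have := mul_le_mul_of_nonneg_left hlog h0.le
      rw [hinv]; nlinarith
    · intro hne
      have hne' : s / m ≠ 1 := by
        intro h
        rw [div_eq_iff h0.ne', one_mul] at h
        exact hne h.symm
      have hlog : Real.log (s / m) < s / m - 1 :=
        Real.log_lt_sub_one_of_pos (by positivity) hne'
      have := mul_lt_mul_of_pos_left hlog h0
      rw [hinv]; nlinarith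

lemma log_identity {m m0 m1 γ : ℝ} (hm : 0 ≤ m) (hm0 : 0 < m0) (hm1 : 0 < m1) (hγ : 0 < γ) :
    m * Real.log (m / m0) + m * Real.log (m / m1) - 2 * m * Real.log γ
      = 2 * m * Real.log (m / (Real.sqrt (m0 * m1) * γ)) := by
  rcases eq_or_lt_of_le hm with h0 | h0
  · simp [← h0]
  · have hs : (0:ℝ) < Real.sqrt (m0 * m1) * γ := by positivity
    rw [Real.log_div h0.ne' hs.ne', Real.log_mul (by positivity) hγ.ne',
      Real.log_sqrt (by positivity), Real.log_mul hm0.ne' hm1.ne',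
      Real.log_div h0.ne' hm0.ne', Real.log_div h0.ne' hm1.ne']
    ring



lemma plan_structure {n : ℕ} (π : Measure (Eucl n × Eucl n)) (x0 x1 : Eucl n)
    (c0 c1 : ℝ≥0∞)
    (h0 : π.map Prod.fst ≪ c0 • Measure.dirac x0)
    (h1 : π.map Prod.snd ≪ c1 • Measure.dirac x1) :
    π = π Set.univ • Measure.dirac (x0, x1) := by
  have hf : π (Prod.fst ⁻¹' {x0}ᶜ) = 0 := by
    have hz : (c0 • Measure.dirac x0) {x0}ᶜ = 0 := by
      rw [Measure.smul_apply, smul_eq_mul,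
        Measure.dirac_apply' _ (measurableSet_singleton x0).compl]
      simp
    have := h0 hz
    rwa [Measure.map_apply measurable_fst (measurableSet_singleton x0).compl] at this
  have hsnd : π (Prod.snd ⁻¹' {x1}ᶜ) = 0 := by
    have hz : (c1 • Measure.dirac x1) {x1}ᶜ = 0 := by
      rw [Measure.smul_apply, smul_eq_mul,
        Measure.dirac_apply' _ (measurableSet_singleton x1).compl]
      simp
    have := h1 hz
    rwa [Measure.map_apply measurable_snd (measurableSet_singleton x1).compl] at this
  refine meas_eq_smul_dirac π (x0, x1) ?_
  refine measure_mono_null (fun p hp => ?_) (measure_union_null hf hsnd)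
  by_contra hc
  simp only [Set.mem_union, Set.mem_preimage, Set.mem_compl_iff, Set.mem_singleton_iff,
    not_or, not_not] at hc
  exact hp (Prod.ext hc.1 hc.2)

lemma HKfun_eval {n : ℕ} (κ m0 m1 : ℝ) (hm0 : 0 < m0) (hm1 : 0 < m1)
    (x0 x1 : Eucl n) (m : ℝ) (hm : 0 ≤ m) :
    HKfun κ (ENNReal.ofReal m • Measure.dirac (x0, x1))
        (ENNReal.ofReal m0 • Measure.dirac x0) (ENNReal.ofReal m1 • Measure.dirac x1)
      = ENNReal.ofReal m * cHK κ x0 x1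
        + ENNReal.ofReal (κ ^ 2 * (m * Real.log (m / m0) - m + m0))
        + ENNReal.ofReal (κ ^ 2 * (m * Real.log (m / m1) - m + m1)) := by
  have key : ∀ c : ℝ, 0 < c →
      c * (m / c * Real.log (m / c) - m / c + 1) = m * Real.log (m / c) - m + c := by
    intro c hc; field_simp
  have hmap0 : (ENNReal.ofReal m • Measure.dirac (x0, x1)).map Prod.fst
      = ENNReal.ofReal m • Measure.dirac x0 := by
    rw [Measure.map_smul, Measure.map_dirac' measurable_fst]
  have hmap1 : (ENNReal.ofReal m • Measure.dirac (x0, x1)).map Prod.snd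
      = ENNReal.ofReal m • Measure.dirac x1 := by
    rw [Measure.map_smul, Measure.map_dirac' measurable_snd]
  have hcost : ∫⁻ p, cHK κ p.1 p.2 ∂(ENNReal.ofReal m • Measure.dirac (x0, x1))
      = ENNReal.ofReal m * cHK κ x0 x1 := by
    rw [lintegral_smul_measure, lintegral_dirac, smul_eq_mul]
  rw [HKfun, hcost, hmap0, hmap1,
    KLdiv_smul_dirac _ _ ENNReal.ofReal_ne_top _ hm0,
    KLdiv_smul_dirac _ _ ENNReal.ofReal_ne_top _ hm1,
    ENNReal.toReal_ofReal hm]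
  congr 1
  · congr 1
    rw [← ENNReal.ofReal_mul hm0.le, key m0 hm0, ← ENNReal.ofReal_mul (sq_nonneg κ)]
  · rw [← ENNReal.ofReal_mul hm1.le, key m1 hm1, ← ENNReal.ofReal_mul (sq_nonneg κ)]


lemma real_decomp (κ m0 m1 γ m : ℝ) (hm0 : 0 < m0) (hm1 : 0 < m1) (hγ : 0 < γ) (hm : 0 ≤ m) :
    m * (-2 * κ ^ 2 * Real.log γ) + κ ^ 2 * (m * Real.log (m / m0) - m + m0)
        + κ ^ 2 * (m * Real.log (m / m1) - m + m1)
      = 2 * κ ^ 2 * (m * Real.log (m / (Real.sqrt (m0 * m1) * γ)) - m + Real.sqrt (m0 * m1) * γ)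
        + κ ^ 2 * (m0 + m1 - 2 * (Real.sqrt (m0 * m1) * γ)) := by
  linear_combination κ ^ 2 * log_identity hm hm0 hm1 hγ

lemma cos_dist_pos {κ d : ℝ} (hκ : 0 < κ) (hd0 : 0 ≤ d) (hd : d < κ * Real.pi / 2) :
    0 < Real.cos (d / κ) := by
  apply Real.cos_pos_of_mem_Ioo
  constructor
  · have h1 := Real.pi_pos
    have h2 : (0:ℝ) ≤ d / κ := by positivity
    linarith
  · rw [div_lt_iff₀ hκ]
    nlinarith

lemma sqrtprod_le {m0 m1 : ℝ} (hm0 : 0 ≤ m0) (hm1 : 0 ≤ m1) :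
    2 * Real.sqrt (m0 * m1) ≤ m0 + m1 := by
  rw [Real.sqrt_mul hm0]
  nlinarith [Real.sq_sqrt hm0, Real.sq_sqrt hm1, sq_nonneg (Real.sqrt m0 - Real.sqrt m1),
    Real.sqrt_nonneg m0, Real.sqrt_nonneg m1]

lemma T_nonneg {κ m0 m1 γ : ℝ} (hm0 : 0 ≤ m0) (hm1 : 0 ≤ m1) (hγ0 : 0 ≤ γ) (hγ1 : γ ≤ 1) :
    0 ≤ κ ^ 2 * (m0 + m1 - 2 * (Real.sqrt (m0 * m1) * γ)) := by
  have h1 := sqrtprod_le hm0 hm1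
  have h2 : Real.sqrt (m0 * m1) * γ ≤ Real.sqrt (m0 * m1) * 1 :=
    mul_le_mul_of_nonneg_left hγ1 (Real.sqrt_nonneg _)
  nlinarith [sq_nonneg κ]

lemma interior_HKfun_smul {n : ℕ} (κ m0 m1 : ℝ) (hκ : 0 < κ) (hm0 : 0 < m0) (hm1 : 0 < m1)
    (x0 x1 : Eucl n) (hd : dist x0 x1 < κ * Real.pi / 2) (m : ℝ) (hm : 0 ≤ m) :
    HKfun κ (ENNReal.ofReal m • Measure.dirac (x0, x1))
        (ENNReal.ofReal m0 • Measure.dirac x0) (ENNReal.ofReal m1 • Measure.dirac x1)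
      = ENNReal.ofReal
          (2 * κ ^ 2 * (m * Real.log (m / (Real.sqrt (m0 * m1) * Real.cos (dist x0 x1 / κ)))
              - m + Real.sqrt (m0 * m1) * Real.cos (dist x0 x1 / κ))
            + κ ^ 2 * (m0 + m1 - 2 * (Real.sqrt (m0 * m1) * Real.cos (dist x0 x1 / κ)))) := by
  have hγ : 0 < Real.cos (dist x0 x1 / κ) := cos_dist_pos hκ dist_nonneg hd
  have hC : 0 ≤ -2 * κ ^ 2 * Real.log (Real.cos (dist x0 x1 / κ)) := by
    have hlog : Real.log (Real.cos (dist x0 x1 / κ)) ≤ 0 :=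
      Real.log_nonpos hγ.le (Real.cos_le_one _)
    nlinarith [sq_nonneg κ]
  have hA0 := (klF_bounds hm hm0).1
  have hA1 := (klF_bounds hm hm1).1
  rw [HKfun_eval κ m0 m1 hm0 hm1 x0 x1 m hm, cHK, if_pos hd,
    ← ENNReal.ofReal_mul hm,
    ← ENNReal.ofReal_add (by positivity) (by positivity),
    ← ENNReal.ofReal_add (by positivity) (by positivity)]
  rw [real_decomp κ m0 m1 _ m hm0 hm1 hγ hm]

lemma interior_lb {n : ℕ} (κ m0 m1 : ℝ) (hκ : 0 < κ) (hm0 : 0 < m0) (hm1 : 0 < m1)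
    (x0 x1 : Eucl n) (hd : dist x0 x1 < κ * Real.pi / 2)
    (π : Measure (Eucl n × Eucl n)) [IsFiniteMeasure π] :
    ENNReal.ofReal (κ ^ 2 * (m0 + m1 - 2 * (Real.sqrt (m0 * m1) * Real.cos (dist x0 x1 / κ))))
      ≤ HKfun κ π (ENNReal.ofReal m0 • Measure.dirac x0) (ENNReal.ofReal m1 • Measure.dirac x1)
    ∧ (HKfun κ π (ENNReal.ofReal m0 • Measure.dirac x0) (ENNReal.ofReal m1 • Measure.dirac x1)
        = ENNReal.ofReal (κ ^ 2 * (m0 + m1 - 2 * (Real.sqrt (m0 * m1) * Real.cos (dist x0 x1 / κ))))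
      → π = ENNReal.ofReal (Real.sqrt (m0 * m1) * Real.cos (dist x0 x1 / κ))
          • Measure.dirac (x0, x1)) := by
  set γ := Real.cos (dist x0 x1 / κ) with hγdef
  have hγ : 0 < γ := cos_dist_pos hκ dist_nonneg hd
  have hγ1 : γ ≤ 1 := Real.cos_le_one _
  set s := Real.sqrt (m0 * m1) * γ with hsdef
  have hs : 0 < s := by positivity
  have hT : 0 ≤ κ ^ 2 * (m0 + m1 - 2 * s) := T_nonneg hm0.le hm1.le hγ.le hγ1
  have hκ2 : ENNReal.ofReal (κ ^ 2) ≠ 0 := by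
    simp only [ne_eq, ENNReal.ofReal_eq_zero, not_le]; positivity
  by_cases h0 : π.map Prod.fst ≪ ENNReal.ofReal m0 • Measure.dirac x0
  · by_cases h1 : π.map Prod.snd ≪ ENNReal.ofReal m1 • Measure.dirac x1
    · have hπ := plan_structure π x0 x1 _ _ h0 h1
      set m : ℝ := (π Set.univ).toReal with hmdef
      have hm : 0 ≤ m := ENNReal.toReal_nonneg
      have hπ' : π = ENNReal.ofReal m • Measure.dirac (x0, x1) := by
        rw [hπ, hmdef, ENNReal.ofReal_toReal (measure_ne_top π _)]
      have heval := interior_HKfun_smul κ m0 m1 hκ hm0 hm1 x0 x1 hd m hm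
      rw [← hγdef, ← hsdef] at heval
      have hD := klF_bounds hm hs
      have hκsq : (0:ℝ) < κ ^ 2 := by positivity
      constructor
      · rw [hπ', heval]
        apply ENNReal.ofReal_le_ofReal
        nlinarith [hD.1, sq_nonneg κ]
      · intro heq
        rw [hπ', heval] at heq
        rw [ENNReal.ofReal_eq_ofReal_iff (by nlinarith [hD.1, sq_nonneg κ]) hT] at heq
        have hms : m = s := by
          by_contra hms
          have hpos := hD.2 hms
          nlinarith [mul_pos hκsq hpos]
        rw [hπ', hms]
    · have hkl : KLdiv (π.map Prod.snd) (ENNReal.ofReal m1 • Measure.dirac x1) = ⊤ := by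
        rw [KLdiv, if_neg h1]
      have htop : HKfun κ π (ENNReal.ofReal m0 • Measure.dirac x0)
          (ENNReal.ofReal m1 • Measure.dirac x1) = ⊤ := by
        rw [HKfun, hkl, ENNReal.mul_top hκ2, add_top]
      rw [htop]
      exact ⟨le_top, fun h => absurd h (by simp)⟩
  · have hkl : KLdiv (π.map Prod.fst) (ENNReal.ofReal m0 • Measure.dirac x0) = ⊤ := by
      rw [KLdiv, if_neg h0]
    have htop : HKfun κ π (ENNReal.ofReal m0 • Measure.dirac x0)
        (ENNReal.ofReal m1 • Measure.dirac x1) = ⊤ := by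
      rw [HKfun, hkl, ENNReal.mul_top hκ2, add_top, top_add]
    rw [htop]
    exact ⟨le_top, fun h => absurd h (by simp)⟩

instance smul_dirac_finite {α : Type*} [MeasurableSpace α] (x : α) (c : ℝ) :
    IsFiniteMeasure (ENNReal.ofReal c • Measure.dirac x) :=
  ⟨by simp [Measure.smul_apply, ENNReal.ofReal_lt_top]⟩

lemma interior_HK2 {n : ℕ} (κ m0 m1 : ℝ) (hκ : 0 < κ) (hm0 : 0 < m0) (hm1 : 0 < m1)
    (x0 x1 : Eucl n) (hd : dist x0 x1 < κ * Real.pi / 2) :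
    HK2 κ (ENNReal.ofReal m0 • Measure.dirac x0) (ENNReal.ofReal m1 • Measure.dirac x1)
      = ENNReal.ofReal
          (κ ^ 2 * (m0 + m1 - 2 * (Real.sqrt (m0 * m1) * Real.cos (dist x0 x1 / κ)))) := by
  set γ := Real.cos (dist x0 x1 / κ) with hγdef
  have hγ : 0 < γ := cos_dist_pos hκ dist_nonneg hd
  set s := Real.sqrt (m0 * m1) * γ with hsdef
  have hs : 0 < s := by positivity
  have heval := interior_HKfun_smul κ m0 m1 hκ hm0 hm1 x0 x1 hd s hs.le
  have hDz : s * Real.log (s / s) - s + s = 0 := by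
    rw [div_self hs.ne', Real.log_one]; ring
  rw [← hγdef, ← hsdef] at heval
  rw [hDz] at heval
  apply le_antisymm
  · refine iInf_le_of_le (ENNReal.ofReal s • Measure.dirac (x0, x1)) ?_
    refine iInf_le_of_le (smul_dirac_finite _ _) ?_
    rw [heval]
    norm_num
  · exact le_iInf fun π => le_iInf fun hfin =>
      (interior_lb κ m0 m1 hκ hm0 hm1 x0 x1 hd π).1


lemma HKfun_zero_eval {n : ℕ} (κ m0 m1 : ℝ) (hm0 : 0 ≤ m0) (hm1 : 0 ≤ m1) (x0 x1 : Eucl n) :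
    HKfun κ (0 : Measure (Eucl n × Eucl n))
        (ENNReal.ofReal m0 • Measure.dirac x0) (ENNReal.ofReal m1 • Measure.dirac x1)
      = ENNReal.ofReal (κ ^ 2 * (m0 + m1)) := by
  rw [HKfun]
  simp only [Measure.map_zero]
  rw [lintegral_zero_measure,
    KLdiv_zero_smul_dirac x0 m0 hm0, KLdiv_zero_smul_dirac x1 m1 hm1, zero_add,
    ← ENNReal.ofReal_mul (sq_nonneg κ), ← ENNReal.ofReal_mul (sq_nonneg κ),
    ← ENNReal.ofReal_add (by positivity) (by positivity)]
  congr 1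
  ring

lemma zero_HK2 {n : ℕ} (κ m0 m1 : ℝ) (hκ : 0 < κ) (hm0 : 0 ≤ m0) (hm1 : 0 ≤ m1)
    (hz : m0 = 0 ∨ m1 = 0) (x0 x1 : Eucl n) :
    HK2 κ (ENNReal.ofReal m0 • Measure.dirac x0) (ENNReal.ofReal m1 • Measure.dirac x1)
      = ENNReal.ofReal (κ ^ 2 * (m0 + m1)) := by
  have hκ2 : ENNReal.ofReal (κ ^ 2) ≠ 0 := by
    simp only [ne_eq, ENNReal.ofReal_eq_zero, not_le]; positivity
  apply le_antisymm
  · refine iInf_le_of_le 0 (iInf_le_of_le inferInstance ?_)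
    exact le_of_eq (HKfun_zero_eval κ m0 m1 hm0 hm1 x0 x1)
  · refine le_iInf fun π => le_iInf fun hfin => ?_
    rcases hz with h | h
    · by_cases h0 : π.map Prod.fst ≪ ENNReal.ofReal m0 • Measure.dirac x0
      · have h1 : π.map Prod.fst Set.univ = 0 := h0 (by simp [h])
        have h2 : π = 0 := by
          rwa [Measure.map_apply measurable_fst MeasurableSet.univ, Set.preimage_univ,
            Measure.measure_univ_eq_zero] at h1
        rw [h2, HKfun_zero_eval κ m0 m1 hm0 hm1 x0 x1]
      · have hkl : KLdiv (π.map Prod.fst) (ENNReal.ofReal m0 • Measure.dirac x0) = ⊤ := by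
          rw [KLdiv, if_neg h0]
        rw [HKfun, hkl, ENNReal.mul_top hκ2, add_top, top_add]
        exact le_top
    · by_cases h0 : π.map Prod.snd ≪ ENNReal.ofReal m1 • Measure.dirac x1
      · have h1 : π.map Prod.snd Set.univ = 0 := h0 (by simp [h])
        have h2 : π = 0 := by
          rwa [Measure.map_apply measurable_snd MeasurableSet.univ, Set.preimage_univ,
            Measure.measure_univ_eq_zero] at h1
        rw [h2, HKfun_zero_eval κ m0 m1 hm0 hm1 x0 x1]
      · have hkl : KLdiv (π.map Prod.snd) (ENNReal.ofReal m1 • Measure.dirac x1) = ⊤ := by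
          rw [KLdiv, if_neg h0]
        rw [HKfun, hkl, ENNReal.mul_top hκ2, add_top]
        exact le_top

lemma boundary_HK2 {n : ℕ} (κ m0 m1 : ℝ) (hκ : 0 < κ) (hm0 : 0 < m0) (hm1 : 0 < m1)
    (x0 x1 : Eucl n) (hd : ¬ dist x0 x1 < κ * Real.pi / 2) :
    HK2 κ (ENNReal.ofReal m0 • Measure.dirac x0) (ENNReal.ofReal m1 • Measure.dirac x1)
      = ENNReal.ofReal (κ ^ 2 * (m0 + m1)) := by
  have hκ2 : ENNReal.ofReal (κ ^ 2) ≠ 0 := by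
    simp only [ne_eq, ENNReal.ofReal_eq_zero, not_le]; positivity
  apply le_antisymm
  · refine iInf_le_of_le 0 (iInf_le_of_le inferInstance ?_)
    exact le_of_eq (HKfun_zero_eval κ m0 m1 hm0.le hm1.le x0 x1)
  · refine le_iInf fun π => le_iInf fun hfin => ?_
    by_cases h0 : π.map Prod.fst ≪ ENNReal.ofReal m0 • Measure.dirac x0
    · by_cases h1 : π.map Prod.snd ≪ ENNReal.ofReal m1 • Measure.dirac x1
      · have hπ := plan_structure π x0 x1 _ _ h0 h1
        by_cases hM : π Set.univ = 0
        · have h2 : π = 0 := Measure.measure_univ_eq_zero.mp hM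
          rw [h2, HKfun_zero_eval κ m0 m1 hm0.le hm1.le x0 x1]
        · have hcost : ∫⁻ p, cHK κ p.1 p.2 ∂π = ⊤ := by
            conv_lhs => rw [hπ]
            rw [lintegral_smul_measure, lintegral_dirac, cHK, if_neg hd,
              smul_eq_mul, ENNReal.mul_top hM]
          refine le_trans le_top ?_
          rw [HKfun, ← hcost]
          exact le_trans le_self_add le_self_add
      · have hkl : KLdiv (π.map Prod.snd) (ENNReal.ofReal m1 • Measure.dirac x1) = ⊤ := by
          rw [KLdiv, if_neg h1]
        rw [HKfun, hkl, ENNReal.mul_top hκ2, add_top]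
        exact le_top
    · have hkl : KLdiv (π.map Prod.fst) (ENNReal.ofReal m0 • Measure.dirac x0) = ⊤ := by
        rw [KLdiv, if_neg h0]
      rw [HKfun, hkl, ENNReal.mul_top hκ2, add_top, top_add]
      exact le_top

lemma truncCos_of_lt {κ d : ℝ} (hκ : 0 < κ) (hd0 : 0 ≤ d) (hd : d < κ * Real.pi / 2) :
    truncCos (d / κ) = Real.cos (d / κ) := by
  rw [truncCos, abs_of_nonneg (by positivity), min_eq_left]
  rw [div_le_iff₀ hκ]
  nlinarith

lemma truncCos_of_ge {κ d : ℝ} (hκ : 0 < κ) (hd0 : 0 ≤ d) (hd : ¬ d < κ * Real.pi / 2) :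
    truncCos (d / κ) = 0 := by
  push_neg at hd
  rw [truncCos, abs_of_nonneg (by positivity), min_eq_right, Real.cos_pi_div_two]
  rw [le_div_iff₀ hκ]
  nlinarith

/-- the HK distance between two Dirac measures, and the unique optimal plan. -/
theorem hk_between_diracs
    {n : ℕ} (hn : 1 ≤ n) (κ : ℝ) (hκ : 0 < κ)
    (x0 x1 : Eucl n) (m0 m1 : ℝ) (hm0 : 0 ≤ m0) (hm1 : 0 ≤ m1) :
    HK2 κ (ENNReal.ofReal m0 • Measure.dirac x0) (ENNReal.ofReal m1 • Measure.dirac x1)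
      = ENNReal.ofReal (κ ^ 2 *
          (m0 + m1 - 2 * Real.sqrt (m0 * m1) * truncCos (dist x0 x1 / κ))) ∧
    (0 < m0 → 0 < m1 → 0 < dist x0 x1 → dist x0 x1 < κ * Real.pi / 2 →
      ∀ π : Measure (Eucl n × Eucl n), IsFiniteMeasure π →
        (HKfun κ π (ENNReal.ofReal m0 • Measure.dirac x0)
            (ENNReal.ofReal m1 • Measure.dirac x1)
          = HK2 κ (ENNReal.ofReal m0 • Measure.dirac x0)
              (ENNReal.ofReal m1 • Measure.dirac x1)
        ↔ π = ENNReal.ofReal (Real.cos (dist x0 x1 / κ) * Real.sqrt (m0 * m1))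
            • Measure.dirac (x0, x1))) := by
  have hγsym : ∀ rest : ℝ, Real.cos (dist x0 x1 / κ) * rest = rest * Real.cos (dist x0 x1 / κ) :=
    fun rest => mul_comm _ _
  constructor
  · by_cases hz : m0 = 0 ∨ m1 = 0
    · rw [zero_HK2 κ m0 m1 hκ hm0 hm1 hz x0 x1]
      have hsq : Real.sqrt (m0 * m1) = 0 := by
        rcases hz with h | h <;> simp [h]
      congr 1
      rw [hsq]
      ring
    · push_neg at hz
      have hm0' : 0 < m0 := hm0.lt_of_ne (Ne.symm hz.1)
      have hm1' : 0 < m1 := hm1.lt_of_ne (Ne.symm hz.2)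
      by_cases hd : dist x0 x1 < κ * Real.pi / 2
      · rw [interior_HK2 κ m0 m1 hκ hm0' hm1' x0 x1 hd]
        congr 1
        rw [truncCos_of_lt hκ dist_nonneg hd]
        ring
      · rw [boundary_HK2 κ m0 m1 hκ hm0' hm1' x0 x1 hd]
        congr 1
        rw [truncCos_of_ge hκ dist_nonneg hd]
        ring
  · intro h0 h1 _hdp hd π hfin
    haveI := hfin
    have hHK2 := interior_HK2 κ m0 m1 hκ h0 h1 x0 x1 hd
    constructor
    · intro heq
      have hres := (interior_lb κ m0 m1 hκ h0 h1 x0 x1 hd π).2 (by rw [heq, hHK2])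
      rw [hres, mul_comm (Real.sqrt (m0 * m1))]
    · intro hπ
      rw [hπ, hHK2, mul_comm (Real.cos (dist x0 x1 / κ))]
      have heval := interior_HKfun_smul κ m0 m1 hκ h0 h1 x0 x1 hd
        (Real.sqrt (m0 * m1) * Real.cos (dist x0 x1 / κ))
        (mul_nonneg (Real.sqrt_nonneg _) (cos_dist_pos hκ dist_nonneg hd).le)
      rw [heval]
      congr 1
      have hs : (0:ℝ) < Real.sqrt (m0 * m1) * Real.cos (dist x0 x1 / κ) := by
        have := cos_dist_pos hκ dist_nonneg hd
        positivity
      rw [div_self hs.ne', Real.log_one]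
      ring
end Lemmas
end

section
/- Let X be a metric space, κ > 0, and let Φ0, Φ1 : X → ℝ be Borel functions with Φ0, Φ1 ≤ κ² satisfying the extended constraint (1 − Φ0(x0)/κ²) ⊙ (1 − Φ1(x1)/κ²) ≥ Cos²(d(x0,x1)/κ) for all x0, x1 ∈ X, where Cos(s) = cos(min(|s|, π/2)) and ⊙ is the usual product with the convention 0 ⊙ (+∞) = +∞. Define the extended-real-valued log-c-transform Φ0^cone(x1) = −∞ if there exists x0 with d(x0,x1) < κπ/2 and Φ0(x0) = κ², and Φ0^cone(x1) = κ² · inf_{x0 : d(x0,x1) < κπ/2} ( 1 − Cos²(d(x0,x1)/κ)/(1 − Φ0(x0)/κ²) ) otherwise. Then Φ1(x1) ≤ Φ0^cone(x1) for every x1 ∈ X, Φ0^cone ≤ κ², and the pair (Φ0, Φ0^cone) also satisfies the constraint (1 − Φ0(x0)/κ²) ⊙ (1 − Φ0^cone(x1)/κ²) ≥ Cos²(d(x0,x1)/κ) for all x0, x1 ∈ X. -/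
open MeasureTheory ENNReal Filter Topology
open scoped Classical

noncomputable section

/-- The extended product `⊙`: the usual product on extended reals, except that
`0 ⊙ (+∞) = (+∞) ⊙ 0 = +∞`. -/
def odot (a b : EReal) : EReal :=
  if (a = 0 ∧ b = ⊤) ∨ (a = ⊤ ∧ b = 0) then ⊤ else a * b

/-- The log-c-transform `Φ0 ↦ Φ0^cone`. -/
def logCTransform {X : Type*} [MetricSpace X] (κ : ℝ) (Φ0 : X → ℝ) (x1 : X) : EReal :=
  if ∃ x0, dist x0 x1 < κ * Real.pi / 2 ∧ Φ0 x0 = κ ^ 2 then ⊥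
  else ((κ ^ 2 : ℝ) : EReal) * ⨅ (x0 : X) (_ : dist x0 x1 < κ * Real.pi / 2),
    ((1 - truncCos (dist x0 x1 / κ) ^ 2 / (1 - Φ0 x0 / κ ^ 2) : ℝ) : EReal)

end

lemma truncCos_pos {κ d : ℝ} (hκ : 0 < κ) (hd : 0 ≤ d) (h : d < κ * Real.pi / 2) :
    0 < truncCos (d / κ) := by
  have h1 : d / κ < Real.pi / 2 := by
    rw [div_lt_iff₀ hκ]; nlinarith
  unfold truncCos
  rw [abs_of_nonneg (div_nonneg hd hκ.le), min_eq_left h1.le]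
  apply Real.cos_pos_of_mem_Ioo
  constructor
  · have := div_nonneg hd hκ.le
    have := Real.pi_pos
    linarith
  · exact h1

lemma truncCos_far {κ d : ℝ} (hκ : 0 < κ) (hd : 0 ≤ d) (h : κ * Real.pi / 2 ≤ d) :
    truncCos (d / κ) = 0 := by
  have h1 : Real.pi / 2 ≤ d / κ := by
    rw [le_div_iff₀ hκ]; nlinarith
  unfold truncCos
  rw [abs_of_nonneg (div_nonneg hd hκ.le), min_eq_right h1, Real.cos_pi_div_two]

/-- properties of the log-c-transform. -/
theorem logCTransform_feasible
    {X : Type*} [MetricSpace X] [MeasurableSpace X] [BorelSpace X]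
    (κ : ℝ) (hκ : 0 < κ) (Φ0 Φ1 : X → ℝ)
    (hΦ0m : Measurable Φ0) (hΦ1m : Measurable Φ1)
    (hΦ0le : ∀ x, Φ0 x ≤ κ ^ 2) (hΦ1le : ∀ x, Φ1 x ≤ κ ^ 2)
    (hfeas : ∀ x0 x1 : X, ((truncCos (dist x0 x1 / κ) ^ 2 : ℝ) : EReal) ≤
      odot ((1 - Φ0 x0 / κ ^ 2 : ℝ) : EReal) ((1 - Φ1 x1 / κ ^ 2 : ℝ) : EReal)) :
    (∀ x1 : X, (Φ1 x1 : EReal) ≤ logCTransform κ Φ0 x1) ∧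
    (∀ x1 : X, logCTransform κ Φ0 x1 ≤ ((κ ^ 2 : ℝ) : EReal)) ∧
    (∀ x0 x1 : X, ((truncCos (dist x0 x1 / κ) ^ 2 : ℝ) : EReal) ≤
      odot ((1 - Φ0 x0 / κ ^ 2 : ℝ) : EReal)
        (1 - logCTransform κ Φ0 x1 * (((κ ^ 2)⁻¹ : ℝ) : EReal))) := by
  have hκ2 : (0:ℝ) < κ ^ 2 := by positivity
  have hfeasR : ∀ x0 x1 : X, truncCos (dist x0 x1 / κ) ^ 2 ≤
      (1 - Φ0 x0 / κ ^ 2) * (1 - Φ1 x1 / κ ^ 2) := by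
    intro x0 x1
    have h := hfeas x0 x1
    rw [odot, if_neg, ← EReal.coe_mul] at h
    · exact_mod_cast h
    · rintro (⟨-, h2⟩ | ⟨h1, -⟩)
      · exact EReal.coe_ne_top _ h2
      · exact EReal.coe_ne_top _ h1
  have hnb : ∀ x1 : X, ¬ ∃ x0, dist x0 x1 < κ * Real.pi / 2 ∧ Φ0 x0 = κ ^ 2 := by
    rintro x1 ⟨x0, hd, hΦ⟩
    have hC := truncCos_pos hκ dist_nonneg hd
    have h := hfeasR x0 x1
    rw [hΦ] at h
    have h0 : (1 : ℝ) - κ ^ 2 / κ ^ 2 = 0 := by field_simp; ring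
    rw [h0, zero_mul] at h
    nlinarith
  have hA : ∀ (x0 x1 : X), dist x0 x1 < κ * Real.pi / 2 → 0 < 1 - Φ0 x0 / κ ^ 2 := by
    intro x0 x1 hd
    have h2 : Φ0 x0 < κ ^ 2 := lt_of_le_of_ne (hΦ0le x0) (fun h => hnb x1 ⟨x0, hd, h⟩)
    have : Φ0 x0 / κ ^ 2 < 1 := (div_lt_one hκ2).2 h2
    linarith
  have hA0 : ∀ x0 : X, 0 ≤ 1 - Φ0 x0 / κ ^ 2 := by
    intro x0
    have : Φ0 x0 / κ ^ 2 ≤ 1 := (div_le_one hκ2).2 (hΦ0le x0)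
    linarith
  have hself : ∀ x1 : X, dist x1 x1 < κ * Real.pi / 2 := by
    intro x1; rw [dist_self]; positivity
  -- lower bound for the infimum
  have hIlb : ∀ x1 : X, ((Φ1 x1 / κ ^ 2 : ℝ) : EReal) ≤
      ⨅ (x0 : X) (_ : dist x0 x1 < κ * Real.pi / 2),
        ((1 - truncCos (dist x0 x1 / κ) ^ 2 / (1 - Φ0 x0 / κ ^ 2) : ℝ) : EReal) := by
    intro x1
    refine le_iInf₂ fun x0 hd => ?_
    rw [EReal.coe_le_coe_iff]
    have hApos := hA x0 x1 hd
    have hdiv : truncCos (dist x0 x1 / κ) ^ 2 / (1 - Φ0 x0 / κ ^ 2) ≤ 1 - Φ1 x1 / κ ^ 2 := by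
      rw [div_le_iff₀ hApos]
      nlinarith [hfeasR x0 x1]
    linarith
  -- upper bound for the infimum
  have hIub : ∀ x1 : X,
      (⨅ (x0 : X) (_ : dist x0 x1 < κ * Real.pi / 2),
        ((1 - truncCos (dist x0 x1 / κ) ^ 2 / (1 - Φ0 x0 / κ ^ 2) : ℝ) : EReal))
        ≤ ((1 : ℝ) : EReal) := by
    intro x1
    refine le_trans (iInf₂_le x1 (hself x1)) ?_
    rw [EReal.coe_le_coe_iff]
    have hApos := hA x1 x1 (hself x1)
    have : 0 ≤ truncCos (dist x1 x1 / κ) ^ 2 / (1 - Φ0 x1 / κ ^ 2) := by positivity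
    linarith
  have hkegal : (0 : EReal) ≤ ((κ ^ 2 : ℝ) : EReal) := by
    exact_mod_cast hκ2.le
  refine ⟨?_, ?_, ?_⟩
  · -- statement 1
    intro x1
    rw [logCTransform, if_neg (hnb x1)]
    calc (Φ1 x1 : EReal) = ((κ ^ 2 * (Φ1 x1 / κ ^ 2) : ℝ) : EReal) := by
          norm_num [mul_div_cancel₀, hκ2.ne']
      _ = ((κ ^ 2 : ℝ) : EReal) * ((Φ1 x1 / κ ^ 2 : ℝ) : EReal) := by
          rw [EReal.coe_mul]
      _ ≤ _ := mul_le_mul_of_nonneg_left (hIlb x1) hkegal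
  · -- statement 2
    intro x1
    rw [logCTransform, if_neg (hnb x1)]
    calc ((κ ^ 2 : ℝ) : EReal) * _ ≤ ((κ ^ 2 : ℝ) : EReal) * ((1 : ℝ) : EReal) :=
          mul_le_mul_of_nonneg_left (hIub x1) hkegal
      _ = ((κ ^ 2 : ℝ) : EReal) := by rw [← EReal.coe_mul, mul_one]
  · -- statement 3
    intro x0 x1
    rw [logCTransform, if_neg (hnb x1)]
    set I : EReal := ⨅ (x0 : X) (_ : dist x0 x1 < κ * Real.pi / 2),
        ((1 - truncCos (dist x0 x1 / κ) ^ 2 / (1 - Φ0 x0 / κ ^ 2) : ℝ) : EReal) with hIdef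
    have hne_bot : I ≠ ⊥ := fun h => by
      have := hIlb x1; rw [← hIdef, h, le_bot_iff] at this
      exact EReal.coe_ne_bot _ this
    have hne_top : I ≠ ⊤ := fun h => by
      have := hIub x1; rw [← hIdef, h, top_le_iff] at this
      exact EReal.coe_ne_top _ this
    lift I to ℝ using ⟨hne_top, hne_bot⟩ with r hr
    have hr1 : r ≤ 1 := by
      have := hIub x1; rw [← hIdef, EReal.coe_le_coe_iff] at this; exact this
    have hmul : ((κ ^ 2 : ℝ) : EReal) * (r : EReal) * (((κ ^ 2)⁻¹ : ℝ) : EReal)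
        = ((r : ℝ) : EReal) := by
      rw [← EReal.coe_mul, ← EReal.coe_mul]
      congr 1
      field_simp
    rw [hmul]
    have hsub : (1 : EReal) - ((r : ℝ) : EReal) = ((1 - r : ℝ) : EReal) := by
      rw [← EReal.coe_one, ← EReal.coe_sub]
    rw [hsub, odot, if_neg, ← EReal.coe_mul, EReal.coe_le_coe_iff]
    · by_cases hd : dist x0 x1 < κ * Real.pi / 2
      · have hApos := hA x0 x1 hd
        have hle : r ≤ 1 - truncCos (dist x0 x1 / κ) ^ 2 / (1 - Φ0 x0 / κ ^ 2) := by
          have := iInf₂_le (f := fun (x0 : X) (_ : dist x0 x1 < κ * Real.pi / 2) =>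
            ((1 - truncCos (dist x0 x1 / κ) ^ 2 / (1 - Φ0 x0 / κ ^ 2) : ℝ) : EReal)) x0 hd
          rw [← hIdef, EReal.coe_le_coe_iff] at this
          exact this
        have : truncCos (dist x0 x1 / κ) ^ 2 / (1 - Φ0 x0 / κ ^ 2) ≤ 1 - r := by linarith
        rw [div_le_iff₀ hApos] at this
        nlinarith
      · push_neg at hd
        rw [truncCos_far hκ dist_nonneg hd]
        have := hA0 x0
        nlinarith
    · rintro (⟨-, h2⟩ | ⟨h1, -⟩)
      · exact EReal.coe_ne_top _ h2
      · exact EReal.coe_ne_top _ h1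
end
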